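/- Let λ_q > 0, λ_n ≥ λ_q, 0 < k < π/4, and suppose the positive real number P satisfies λ_q ≥ P and P = (1 − c² sin²(kP/λ_n)) λ_q for some c ∈ [−1,1]. Then P ≥ 2λ_q / (1 + sqrt(1 + 4 c² k² λ_q²/λ_n²)) ≥ 2kλ_q/(λ_n + sqrt(λ_n² + 4k²λ_q²)) · (λ_n/k). -/

import Mathlib

set_option maxHeartbeats 800000


/-- Lower bound on the value of the potential at critical points (Theorem 3):
if `0 < P ≤ λq`, `0 < λq ≤ λn`, `0 < k < π/4`, `c² ≤ 1` and
`P = (1 − c² sin²(kP/λn)) λq`, then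
`P ≥ 2λq / (1 + √(1 + 4c²k²λq²/λn²)) ≥ (2kλq/(λn + √(λn² + 4k²λq²))) * (λn/k)`. -/
theorem stmt10 (lamq lamn k c P : ℝ)
    (hq : 0 < lamq) (hn : lamq ≤ lamn) (hk : 0 < k) (hk' : k < Real.pi / 4)
    (hc : c ∈ Set.Icc (-1 : ℝ) 1) (hP : 0 < P) (hPq : lamq ≥ P)
    (heq : P = (1 - c ^ 2 * Real.sin (k * P / lamn) ^ 2) * lamq) :
    P ≥ 2 * lamq / (1 + Real.sqrt (1 + 4 * c ^ 2 * k ^ 2 * lamq ^ 2 / lamn ^ 2)) ∧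
    2 * lamq / (1 + Real.sqrt (1 + 4 * c ^ 2 * k ^ 2 * lamq ^ 2 / lamn ^ 2)) ≥
      (2 * k * lamq / (lamn + Real.sqrt (lamn ^ 2 + 4 * k ^ 2 * lamq ^ 2))) * (lamn / k) := by
  obtain ⟨hc1, hc2⟩ := hc
  have hc2' : c ^ 2 ≤ 1 := by nlinarith
  have hc0 : (0:ℝ) ≤ c ^ 2 := sq_nonneg c
  have hln : (0:ℝ) < lamn := lt_of_lt_of_le hq hn
  set z := k * P / lamn with hzdef
  have hz : 0 < z := by rw [hzdef]; positivity
  have hsinlt : Real.sin z < z := Real.sin_lt hz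
  have hsinpos : 0 < Real.sin z := by
    apply Real.sin_pos_of_pos_of_lt_pi hz
    have hPn : P / lamn ≤ 1 := (div_le_one hln).2 (le_trans hPq hn)
    have hzk : z ≤ k := by
      rw [hzdef, mul_div_assoc]
      nlinarith
    nlinarith [Real.pi_pos]
  have hsinsq : Real.sin z ^ 2 ≤ z ^ 2 := by nlinarith
  have hz2 : z ^ 2 * lamn ^ 2 = k ^ 2 * P ^ 2 := by
    rw [hzdef]; field_simp
  -- key quadratic inequality
  have hkey : (lamq - P) * lamn ^ 2 ≤ c ^ 2 * k ^ 2 * lamq * P ^ 2 := by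
    have h1 : lamq - P = c ^ 2 * Real.sin z ^ 2 * lamq := by rw [heq]; ring
    calc (lamq - P) * lamn ^ 2 = c ^ 2 * Real.sin z ^ 2 * lamq * lamn ^ 2 := by rw [h1]
      _ ≤ c ^ 2 * z ^ 2 * lamq * lamn ^ 2 := by
          have h := mul_le_mul_of_nonneg_left hsinsq hc0
          nlinarith [mul_le_mul_of_nonneg_right h (by positivity : (0:ℝ) ≤ lamq * lamn ^ 2)]
      _ = c ^ 2 * (z ^ 2 * lamn ^ 2) * lamq := by ring
      _ = c ^ 2 * (k ^ 2 * P ^ 2) * lamq := by rw [hz2]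
      _ = c ^ 2 * k ^ 2 * lamq * P ^ 2 := by ring
  clear hsinsq hsinpos hsinlt hz hz2 heq
  set D := 4 * c ^ 2 * k ^ 2 * lamq ^ 2 / lamn ^ 2 with hDdef
  have hDnn : 0 ≤ D := by rw [hDdef]; positivity
  have hD : D * lamn ^ 2 = 4 * c ^ 2 * k ^ 2 * lamq ^ 2 := by
    rw [hDdef]; field_simp
  clear_value D
  have hS0 : (0:ℝ) ≤ 1 + D := by linarith
  have hsqrtS1 : 1 ≤ Real.sqrt (1 + D) := by
    have h := Real.sqrt_le_sqrt (show (1:ℝ) ≤ 1 + D by linarith)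
    rwa [Real.sqrt_one] at h
  have hden : (0:ℝ) < 1 + Real.sqrt (1 + D) := by linarith
  -- first part
  have hpart1 : P ≥ 2 * lamq / (1 + Real.sqrt (1 + D)) := by
    rw [ge_iff_le, div_le_iff₀ hden]
    have hstep : (2 * lamq - P) / P ≤ Real.sqrt (1 + D) := by
      rw [Real.le_sqrt' (by apply div_pos _ hP; linarith)]
      rw [div_pow, div_le_iff₀ (by positivity : (0:ℝ) < P ^ 2)]
      have hk2 : (lamq - P) * lamn ^ 2 * (4 * lamq) ≤ c ^ 2 * k ^ 2 * lamq * P ^ 2 * (4 * lamq) :=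
        mul_le_mul_of_nonneg_right hkey (by positivity)
      have hD2 : D * lamn ^ 2 * P ^ 2 = 4 * c ^ 2 * k ^ 2 * lamq ^ 2 * P ^ 2 := by
        rw [hD]
      have h5 : (2 * lamq - P) ^ 2 * lamn ^ 2 ≤ (1 + D) * P ^ 2 * lamn ^ 2 := by
        nlinarith [hk2, hD2]
      exact le_of_mul_le_mul_right h5 (by positivity)
    have := (div_le_iff₀ hP).1 hstep
    nlinarith
  refine ⟨hpart1, ?_⟩
  -- second part
  have hTpos : (0:ℝ) < lamn ^ 2 + 4 * k ^ 2 * lamq ^ 2 := by positivity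
  have hsqT : 0 ≤ Real.sqrt (lamn ^ 2 + 4 * k ^ 2 * lamq ^ 2) := Real.sqrt_nonneg _
  have hkey2 : lamn * Real.sqrt (1 + D) ≤ Real.sqrt (lamn ^ 2 + 4 * k ^ 2 * lamq ^ 2) := by
    have h1 : lamn * Real.sqrt (1 + D) = Real.sqrt (lamn ^ 2 * (1 + D)) := by
      rw [Real.sqrt_mul (sq_nonneg lamn), Real.sqrt_sq hln.le]
    rw [h1]
    apply Real.sqrt_le_sqrt
    have h2 : lamn ^ 2 * (1 + D) = lamn ^ 2 + 4 * c ^ 2 * k ^ 2 * lamq ^ 2 := by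
      rw [mul_add, mul_one, mul_comm, hD]
    rw [h2]
    nlinarith [mul_le_mul_of_nonneg_right hc2' (by positivity : (0:ℝ) ≤ 4 * k ^ 2 * lamq ^ 2)]
  rw [ge_iff_le, div_mul_div_comm, div_le_div_iff₀ (by positivity) hden]
  nlinarith [mul_le_mul_of_nonneg_left hkey2 (by positivity : (0:ℝ) ≤ 2 * k * lamq)]
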